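/- Let R = [[-1/2, √3/2], [-√3/2, -1/2]] and J = [[0, 1], [-1, 0]]. Suppose A : ℝ² → M₂(ℂ) has differentiable entries and satisfies A(R⁻¹x) = R⁻¹ A(x) R for all x ∈ ℝ². Define C : ℝ² → M₂(ℂ) entrywise by C_{kl}(x) := D(A_{kl})(x)[Jx], the directional derivative of the entry A_{kl} at x in the direction Jx. Then C(R⁻¹x) = R⁻¹ C(x) R for all x ∈ ℝ². -/

import Mathlib

open Complex

/-- The clockwise rotation by `2π/3`: `R = [[-1/2, √3/2],[-√3/2, -1/2]]`. -/
noncomputable def Rm : Matrix (Fin 2) (Fin 2) ℝ :=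
  !![-(1/2), Real.sqrt 3 / 2; -(Real.sqrt 3) / 2, -(1/2)]

/-- The generator of infinitesimal rotations `J = [[0,1],[-1,0]]`. -/
def Jm : Matrix (Fin 2) (Fin 2) ℝ := !![0, 1; -1, 0]

/-- `R` regarded as a complex matrix. -/
noncomputable def Rc : Matrix (Fin 2) (Fin 2) ℂ := Rm.map Complex.ofReal

/-- The leading-order perturbation tensor `C(x)` with entries
`C_{kl}(x) = D(A_{kl})(x)[Jx]`. -/
noncomputable def Cpert (A : (Fin 2 → ℝ) → Matrix (Fin 2) (Fin 2) ℂ)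
    (x : Fin 2 → ℝ) : Matrix (Fin 2) (Fin 2) ℂ :=
  Matrix.of fun k l => fderiv ℝ (fun y => A y k l) x (Jm.mulVec x)

/-- Explicit form of the inverse of `Rm`. -/
noncomputable def Rinv : Matrix (Fin 2) (Fin 2) ℝ :=
  !![-(1/2), -(Real.sqrt 3) / 2; Real.sqrt 3 / 2, -(1/2)]

lemma h3 : Real.sqrt 3 * Real.sqrt 3 = 3 := Real.mul_self_sqrt (by norm_num)

lemma hRmul : Rm * Rinv = 1 := by
  ext i j
  fin_cases i <;> fin_cases j <;>
    simp [Rm, Rinv, Matrix.mul_apply, Fin.sum_univ_two, Matrix.one_apply] <;> nlinarith [h3]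

lemma hRinv : Rm⁻¹ = Rinv := Matrix.inv_eq_right_inv hRmul

lemma hRcinv : Rc⁻¹ = Rinv.map Complex.ofReal := by
  apply Matrix.inv_eq_right_inv
  have : (Rm * Rinv).map (Complex.ofRealHom : ℝ →+* ℂ)
      = (1 : Matrix (Fin 2) (Fin 2) ℝ).map Complex.ofRealHom := by
    rw [hRmul]
  rw [Matrix.map_mul] at this
  have e : (⇑Complex.ofRealHom : ℝ → ℂ) = Complex.ofReal := rfl
  simpa [Rc, e] using this

lemma hcomm : Rm⁻¹ * Jm = Jm * Rm⁻¹ := by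
  rw [hRinv]
  ext i j
  fin_cases i <;> fin_cases j <;>
    simp [Rinv, Jm, Matrix.mul_apply, Fin.sum_univ_two] <;> ring

/-- `2π/3`-rotational invariance of the perturbation tensor `C`. -/
theorem statement2 (A : (Fin 2 → ℝ) → Matrix (Fin 2) (Fin 2) ℂ)
    (hdiff : ∀ k l, Differentiable ℝ fun x => A x k l)
    (hsym : ∀ x, A (Rm⁻¹.mulVec x) = Rc⁻¹ * A x * Rc) :
    ∀ x, Cpert A (Rm⁻¹.mulVec x) = Rc⁻¹ * Cpert A x * Rc := by
  intro x
  have hvec : Rm⁻¹.mulVec (Jm.mulVec x) = Jm.mulVec (Rm⁻¹.mulVec x) := by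
    rw [Matrix.mulVec_mulVec, Matrix.mulVec_mulVec, hcomm]
  ext k l
  set T : (Fin 2 → ℝ) →L[ℝ] (Fin 2 → ℝ) := (Matrix.mulVecLin Rm⁻¹).toContinuousLinearMap with hTdef
  have hT : HasFDerivAt (fun y => Rm⁻¹.mulVec y) T x := T.hasFDerivAt
  have hcomp : HasFDerivAt (fun y => A (Rm⁻¹.mulVec y) k l)
      ((fderiv ℝ (fun y => A y k l) (Rm⁻¹.mulVec x)).comp T) x :=
    ((hdiff k l (Rm⁻¹.mulVec x)).hasFDerivAt).comp x hT
  have hfun : (fun y => A (Rm⁻¹.mulVec y) k l)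
      = fun y => ∑ j, ∑ i, (Rc⁻¹ k i * Rc j l) * A y i j := by
    funext y
    rw [hsym y]
    simp [Matrix.mul_apply, Fin.sum_univ_two]
    ring
  have hsum : HasFDerivAt (fun y => ∑ j, ∑ i, (Rc⁻¹ k i * Rc j l) * A y i j)
      (∑ j, ∑ i, (Rc⁻¹ k i * Rc j l) • fderiv ℝ (fun y => A y i j) x) x :=
    HasFDerivAt.fun_sum fun j _ => HasFDerivAt.fun_sum fun i _ =>
      ((hdiff i j x).hasFDerivAt).const_mul _
  rw [hfun] at hcomp
  have heq := hcomp.unique hsum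
  have happ := congrArg (fun L => L (Jm.mulVec x)) heq
  simp only [ContinuousLinearMap.comp_apply] at happ
  have hTapp : T (Jm.mulVec x) = Rm⁻¹.mulVec (Jm.mulVec x) := rfl
  rw [hTapp, hvec] at happ
  simp only [Cpert, Matrix.of_apply]
  rw [happ]
  simp [Matrix.mul_apply, Fin.sum_univ_two, Cpert]
  ring
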